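/- Define the sequence H : ℕ → ℤ by H(0) = 1, H(1) = 1, and H(q) = 17·H(q−1) − H(q−2) − 3 for q ≥ 2. Then for every k ≥ 0, the continuant of the sequence consisting of k copies of the block (3,5), followed by the entries 3, 4, followed by k copies of the block (5,3), equals H(2k+2). (For example, k = 0 gives K(3,4) = 13 = H(2) and k = 1 gives K(3,5,3,4,5,3) = 3673 = H(4).) -/

import Mathlib

/-- The continuant: K [] = 1, K [a] = a, K (a::b::t) = a·K(b::t) + K t. -/
def continuant : List ℤ → ℤ
  | [] => 1
  | [a] => a
  | a :: b :: t => a * continuant (b :: t) + continuant t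

/-- H(q) = m_{(q−1)/q}: H(0) = 1, H(1) = 1, H(q) = 17·H(q−1) − H(q−2) − 3. -/
def H : ℕ → ℤ
  | 0 => 1
  | 1 => 1
  | (n + 2) => 17 * H (n + 1) - H n - 3

/-- The continuant of the tail (0 for the empty list). -/
def Kt : List ℤ → ℤ
  | [] => 0
  | _ :: t => continuant t

lemma continuant_cons (a : ℤ) (l : List ℤ) :
    continuant (a :: l) = a * continuant l + Kt l := by
  cases l <;> simp [continuant, Kt]

/-- Quadruple (p,q,r,s) representing the matrix product ∏ [[aᵢ,1],[1,0]]. -/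
def Q : List ℤ → ℤ × ℤ × ℤ × ℤ
  | [] => (1, 0, 0, 1)
  | a :: t =>
    (a * (Q t).1 + (Q t).2.2.1, a * (Q t).2.1 + (Q t).2.2.2, (Q t).1, (Q t).2.1)

def qmul (x y : ℤ × ℤ × ℤ × ℤ) : ℤ × ℤ × ℤ × ℤ :=
  (x.1 * y.1 + x.2.1 * y.2.2.1,
   x.1 * y.2.1 + x.2.1 * y.2.2.2,
   x.2.2.1 * y.1 + x.2.2.2 * y.2.2.1,
   x.2.2.1 * y.2.1 + x.2.2.2 * y.2.2.2)

lemma Q_spec (l : List ℤ) : (Q l).1 = continuant l ∧ (Q l).2.2.1 = Kt l := by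
  induction l with
  | nil => simp [Q, Kt, continuant]
  | cons a t ih =>
    refine ⟨?_, ?_⟩
    · rw [continuant_cons]
      simp only [Q]
      rw [ih.1, ih.2]
    · simp only [Q, Kt]
      exact ih.1

lemma Q_append (u v : List ℤ) : Q (u ++ v) = qmul (Q u) (Q v) := by
  induction u with
  | nil => simp [Q, qmul]
  | cons a t ih =>
    simp only [List.cons_append, Q, qmul, Prod.mk.injEq]
    rw [ih]
    simp only [qmul]
    refine ⟨by ring, by ring, trivial, trivial⟩

def L (k : ℕ) : List ℤ :=
  (List.replicate k [(3 : ℤ), 5]).flatten ++ [3, 4]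
    ++ (List.replicate k [(5 : ℤ), 3]).flatten

lemma L_succ (k : ℕ) : L (k + 1) = [3, 5] ++ L k ++ [5, 3] := by
  show _ = ([(3:ℤ),5] ++ L k) ++ [5,3]
  rw [L, L, List.replicate_succ, List.replicate_succ']
  simp [List.flatten_append]

lemma main (k : ℕ) :
    (Q (L k)).1 = H (2 * k + 2) ∧
    3 * (Q (L k)).2.1 = H (2 * k + 2) - H (2 * k + 1) - 3 ∧
    (Q (L k)).2.2.1 = (Q (L k)).2.1 + 1 ∧
    3 * (Q (L k)).2.2.2 = 5 * H (2 * k + 1) - 2 := by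
  induction k with
  | zero =>
    have : L 0 = [3, 4] := by rfl
    rw [this]
    norm_num [Q, H]
  | succ k ih =>
    have hA : Q [(3:ℤ), 5] = (16, 3, 5, 1) := by norm_num [Q]
    have hB : Q [(5:ℤ), 3] = (16, 5, 3, 1) := by norm_num [Q]
    rw [L_succ, Q_append, Q_append, hA, hB]
    have h3 : H (2 * k + 3) = 17 * H (2 * k + 2) - H (2 * k + 1) - 3 := by
      have e : 2 * k + 3 = (2 * k + 1) + 2 := by omega
      rw [e]
      simp only [H]
    have h4 : H (2 * k + 4) = 17 * H (2 * k + 3) - H (2 * k + 2) - 3 := by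
      have e : 2 * k + 4 = (2 * k + 2) + 2 := by omega
      rw [e]
      simp only [H]
    have i1 : 2 * (k + 1) + 2 = 2 * k + 4 := by omega
    have i2 : 2 * (k + 1) + 1 = 2 * k + 3 := by omega
    rw [i1, i2]
    rcases hQ : Q (L k) with ⟨p, q, r, s⟩
    rw [hQ] at ih
    obtain ⟨h1, h2, hr, hs⟩ := ih
    simp only [qmul] at *
    refine ⟨?_, ?_, ?_, ?_⟩ <;> omega

/-- K((3,5)^k, 3, 4, (5,3)^k) = H(2k+2) for every k ≥ 0. -/
theorem continuant_q_minus_one_over_even_q (k : ℕ) :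
    continuant
      ((List.replicate k [(3 : ℤ), 5]).flatten ++ [3, 4]
        ++ (List.replicate k [(5 : ℤ), 3]).flatten)
      = H (2 * k + 2) := by
  have h := (Q_spec (L k)).1
  rw [(main k).1] at h
  exact h.symm
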